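/- Let a < b be real numbers, let u : ℝ × ℝ → ℂ be continuously differentiable on [a,b] × [0,1], and let V : ℝ × ℝ → ℂ be continuous, such that ∂u/∂s (s,t) = i · (V(s,t) − ∂u/∂t (s,t)) for all (s,t) ∈ [a,b] × [0,1]. Assume Re u(s,0) = Re u(s,1) for all s ∈ [a,b], and assume Im u(s,t) > 1/10 and Re V(s,t) < 0 for all (s,t) ∈ [a,b] × [0,1]. Then ∫₀¹ Im u(a,t) dt > ∫₀¹ Im u(b,t) dt. -/

import Mathlib

open MeasureTheory

/-- FTC-2 for functions with a derivative within `Icc c d`. -/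
lemma ftc_icc {E : Type*} [NormedAddCommGroup E] [NormedSpace ℝ E] [CompleteSpace E]
    {c d : ℝ} (hcd : c ≤ d)
    {φ φ' : ℝ → E}
    (hder : ∀ x ∈ Set.Icc c d, HasDerivWithinAt φ (φ' x) (Set.Icc c d) x)
    (hcont' : ContinuousOn φ' (Set.Icc c d)) :
    ∫ x in c..d, φ' x = φ d - φ c := by
  refine intervalIntegral.integral_eq_sub_of_hasDeriv_right_of_le hcd
    (fun x hx => (hder x hx).continuousWithinAt)
    (fun x hx => (hder x ⟨hx.1.le, hx.2.le⟩).mono_of_mem_nhdsWithin ?_)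
    (hcont'.intervalIntegrable_of_Icc hcd)
  exact Filter.mem_of_superset (Ioc_mem_nhdsGT_of_mem ⟨le_rfl, hx.2⟩)
    (fun y hy => ⟨hx.1.le.trans hy.1.le, hy.2⟩)

/-- weak Morse approximation, `y`-direction. For a `C¹` solution `u` of
the perturbed Cauchy–Riemann equation `∂ₛu = i·(V − ∂ₜu)` on `[a,b] × [0,1]` with
`Re u(s,0) = Re u(s,1)`, if `Im u > 1/10` and `Re V < 0` throughout, then
`∫₀¹ Im u(a,t) dt > ∫₀¹ Im u(b,t) dt`. -/
theorem stmt_4 (a b : ℝ) (hab : a < b) (u V : ℝ × ℝ → ℂ)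
    (hu : ContDiffOn ℝ 1 u (Set.Icc a b ×ˢ Set.Icc (0:ℝ) 1))
    (hV : ContinuousOn V (Set.Icc a b ×ˢ Set.Icc (0:ℝ) 1))
    (hpde : ∀ p ∈ Set.Icc a b ×ˢ Set.Icc (0:ℝ) 1,
      fderivWithin ℝ u (Set.Icc a b ×ˢ Set.Icc (0:ℝ) 1) p ((1:ℝ), (0:ℝ)) =
        Complex.I * (V p - fderivWithin ℝ u (Set.Icc a b ×ˢ Set.Icc (0:ℝ) 1) p ((0:ℝ), (1:ℝ))))
    (hbd : ∀ s ∈ Set.Icc a b, (u (s, 0)).re = (u (s, 1)).re)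
    (him : ∀ p ∈ Set.Icc a b ×ˢ Set.Icc (0:ℝ) 1, (1:ℝ)/10 < (u p).im)
    (hVre : ∀ p ∈ Set.Icc a b ×ˢ Set.Icc (0:ℝ) 1, (V p).re < 0) :
    ∫ t in (0:ℝ)..1, (u (b, t)).im < ∫ t in (0:ℝ)..1, (u (a, t)).im := by
  set S : Set (ℝ × ℝ) := Set.Icc a b ×ˢ Set.Icc (0:ℝ) 1 with hSdef
  have h01 : (0:ℝ) ≤ 1 := zero_le_one
  have hS_uniq : UniqueDiffOn ℝ S :=
    (uniqueDiffOn_Icc hab).prod (uniqueDiffOn_Icc one_pos)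
  have hS_cpt : IsCompact S := isCompact_Icc.prod isCompact_Icc
  set D : ℝ × ℝ → (ℝ × ℝ) →L[ℝ] ℂ := fderivWithin ℝ u S with hDdef
  have hDc : ContinuousOn D S := hu.continuousOn_fderivWithin hS_uniq le_rfl
  have hdiff : ∀ p ∈ S, HasFDerivWithinAt u (D p) S p := fun p hp =>
    ((hu.differentiableOn one_ne_zero) p hp).hasFDerivWithinAt
  set f : ℝ × ℝ → ℂ := fun p => D p ((1:ℝ), (0:ℝ)) with hfdef
  set g : ℝ × ℝ → ℂ := fun p => D p ((0:ℝ), (1:ℝ)) with hgdef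
  have hfc : ContinuousOn f S :=
    (ContinuousLinearMap.apply ℝ ℂ ((1:ℝ), (0:ℝ))).continuous.comp_continuousOn hDc
  have hgc : ContinuousOn g S :=
    (ContinuousLinearMap.apply ℝ ℂ ((0:ℝ), (1:ℝ))).continuous.comp_continuousOn hDc
  -- slice derivatives in the s-direction
  have hslice_s : ∀ t ∈ Set.Icc (0:ℝ) 1, ∀ s ∈ Set.Icc a b,
      HasDerivWithinAt (fun s => u (s, t)) (f (s, t)) (Set.Icc a b) s := by
    intro t ht s hs
    have hψ : HasDerivWithinAt (fun s : ℝ => ((s : ℝ), t)) ((1:ℝ), (0:ℝ)) (Set.Icc a b) s :=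
      (HasDerivAt.prodMk (hasDerivAt_id s) (hasDerivAt_const s t)).hasDerivWithinAt
    exact (hdiff (s, t) ⟨hs, ht⟩).comp_hasDerivWithinAt s hψ (fun x hx => (⟨hx, ht⟩ : (x, t) ∈ S))
  -- slice derivatives in the t-direction
  have hslice_t : ∀ s ∈ Set.Icc a b, ∀ t ∈ Set.Icc (0:ℝ) 1,
      HasDerivWithinAt (fun t => u (s, t)) (g (s, t)) (Set.Icc (0:ℝ) 1) t := by
    intro s hs t ht
    have hψ : HasDerivWithinAt (fun t : ℝ => (s, t)) ((0:ℝ), (1:ℝ)) (Set.Icc (0:ℝ) 1) t :=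
      (HasDerivAt.prodMk (hasDerivAt_const t s) (hasDerivAt_id t)).hasDerivWithinAt
    exact (hdiff (s, t) ⟨hs, ht⟩).comp_hasDerivWithinAt t hψ (fun x hx => ⟨hs, hx⟩)
  -- the key pointwise identity : Im ∂ₛu = Re V − Re ∂ₜu
  have hkey : ∀ p ∈ S, (f p).im = (V p).re - (g p).re := by
    intro p hp
    have := hpde p hp
    have hfp : f p = Complex.I * (V p - g p) := this
    rw [hfp, Complex.mul_im]
    simp [Complex.sub_re, Complex.sub_im]
  -- FTC in the s-direction
  have hftc_s : ∀ t ∈ Set.Icc (0:ℝ) 1,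
      ∫ s in a..b, (f (s, t)).im = (u (b, t)).im - (u (a, t)).im := by
    intro t ht
    have hder : ∀ s ∈ Set.Icc a b,
        HasDerivWithinAt (fun s => (u (s, t)).im) ((f (s, t)).im) (Set.Icc a b) s := by
      intro s hs
      exact (Complex.imCLM.hasFDerivAt.comp_hasDerivWithinAt s (hslice_s t ht s hs))
    exact ftc_icc hab.le hder
      ((Complex.continuous_im.comp_continuousOn
        (hfc.comp (Continuous.continuousOn (by fun_prop)) (fun s hs => ⟨hs, ht⟩))))
  -- FTC in the t-direction
  have hftc_t : ∀ s ∈ Set.Icc a b, ∫ t in (0:ℝ)..1, (g (s, t)).re = 0 := by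
    intro s hs
    have hder : ∀ t ∈ Set.Icc (0:ℝ) 1,
        HasDerivWithinAt (fun t => (u (s, t)).re) ((g (s, t)).re) (Set.Icc (0:ℝ) 1) t := by
      intro t ht
      exact (Complex.reCLM.hasFDerivAt.comp_hasDerivWithinAt t (hslice_t s hs t ht))
    have := ftc_icc h01 hder
      ((Complex.continuous_re.comp_continuousOn
        (hgc.comp (Continuous.continuousOn (by fun_prop)) (fun t ht => ⟨hs, ht⟩))))
    rw [this, ← hbd s hs, sub_self]
  -- the function h = Im ∂ₛu, continuous on S, hence integrable
  set h : ℝ × ℝ → ℝ := fun p => (f p).im with hhdef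
  have hhc : ContinuousOn h S := Complex.continuous_im.comp_continuousOn hfc
  have hhint : Integrable h ((volume.restrict (Set.Icc a b)).prod
      (volume.restrict (Set.Icc (0:ℝ) 1))) := by
    have h0 : IntegrableOn h S volume := hhc.integrableOn_compact hS_cpt
    rwa [Measure.prod_restrict, ← Measure.volume_eq_prod]
  -- Fubini : equate the two iterated integrals
  have hswap :
      ∫ t in Set.Icc (0:ℝ) 1, (∫ s in Set.Icc a b, h (s, t)) =
      ∫ s in Set.Icc a b, (∫ t in Set.Icc (0:ℝ) 1, h (s, t)) := by
    rw [← MeasureTheory.integral_prod h hhint, MeasureTheory.integral_prod_symm h hhint]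
  -- the left side equals  ∫₀¹ Im u(b,t) − ∫₀¹ Im u(a,t)
  have hub_cont : ContinuousOn (fun t => (u (b, t)).im) (Set.Icc (0:ℝ) 1) := by
    refine Complex.continuous_im.comp_continuousOn ?_
    exact (hu.continuousOn.comp (Continuous.continuousOn (by fun_prop))
      (fun t ht => ⟨⟨hab.le, le_refl b⟩, ht⟩))
  have hua_cont : ContinuousOn (fun t => (u (a, t)).im) (Set.Icc (0:ℝ) 1) := by
    refine Complex.continuous_im.comp_continuousOn ?_
    exact (hu.continuousOn.comp (Continuous.continuousOn (by fun_prop))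
      (fun t ht => ⟨⟨le_refl a, hab.le⟩, ht⟩))
  have hLHS : ∫ t in Set.Icc (0:ℝ) 1, (∫ s in Set.Icc a b, h (s, t)) =
      (∫ t in (0:ℝ)..1, (u (b, t)).im) - ∫ t in (0:ℝ)..1, (u (a, t)).im := by
    have h1 : ∀ t ∈ Set.Icc (0:ℝ) 1,
        (∫ s in Set.Icc a b, h (s, t)) = (u (b, t)).im - (u (a, t)).im := by
      intro t ht
      rw [MeasureTheory.integral_Icc_eq_integral_Ioc,
        ← intervalIntegral.integral_of_le hab.le]
      exact hftc_s t ht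
    rw [MeasureTheory.setIntegral_congr_fun measurableSet_Icc h1,
      MeasureTheory.integral_Icc_eq_integral_Ioc, ← intervalIntegral.integral_of_le h01,
      intervalIntegral.integral_sub (hub_cont.intervalIntegrable_of_Icc h01)
        (hua_cont.intervalIntegrable_of_Icc h01)]
  -- the right side is negative
  have hinner_neg : ∀ s ∈ Set.Ioo a b, (∫ t in Set.Icc (0:ℝ) 1, h (s, t)) < 0 := by
    intro s hs
    have hs' : s ∈ Set.Icc a b := ⟨hs.1.le, hs.2.le⟩
    have hVs : ContinuousOn (fun t => (V (s, t)).re) (Set.Icc (0:ℝ) 1) := by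
      refine Complex.continuous_re.comp_continuousOn ?_
      exact hV.comp (Continuous.continuousOn (by fun_prop)) (fun t ht => ⟨hs', ht⟩)
    have heq : ∀ t ∈ Set.Icc (0:ℝ) 1, h (s, t) = (V (s, t)).re - (g (s, t)).re :=
      fun t ht => hkey (s, t) ⟨hs', ht⟩
    rw [MeasureTheory.setIntegral_congr_fun measurableSet_Icc heq,
      MeasureTheory.integral_Icc_eq_integral_Ioc, ← intervalIntegral.integral_of_le h01]
    have hgint : IntervalIntegrable (fun t => (g (s, t)).re) volume 0 1 :=
      ((Complex.continuous_re.comp_continuousOn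
        (hgc.comp (Continuous.continuousOn (by fun_prop : Continuous fun t : ℝ => (s, t)))
          (fun t ht => ⟨hs', ht⟩)))).intervalIntegrable_of_Icc h01
    rw [intervalIntegral.integral_sub (hVs.intervalIntegrable_of_Icc h01) hgint, hftc_t s hs',
      sub_zero]
    have hpos : (0:ℝ) < ∫ t in (0:ℝ)..1, -(V (s, t)).re := by
      refine intervalIntegral.intervalIntegral_pos_of_pos_on
        ((hVs.neg).intervalIntegrable_of_Icc h01) (fun t ht => ?_) one_pos
      simpa using hVre (s, t) ⟨hs', ⟨ht.1.le, ht.2.le⟩⟩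
    rw [intervalIntegral.integral_neg] at hpos
    linarith
  have hinner_int : IntegrableOn (fun s => ∫ t in Set.Icc (0:ℝ) 1, h (s, t))
      (Set.Icc a b) volume := hhint.integral_prod_left
  have hRHS : (∫ s in Set.Icc a b, (∫ t in Set.Icc (0:ℝ) 1, h (s, t))) < 0 := by
    rw [MeasureTheory.integral_Icc_eq_integral_Ioc, ← intervalIntegral.integral_of_le hab.le]
    have hpos : (0:ℝ) < ∫ s in a..b, -(∫ t in Set.Icc (0:ℝ) 1, h (s, t)) := by
      refine intervalIntegral.intervalIntegral_pos_of_pos_on ?_ (fun s hs => ?_) hab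
      · exact ((intervalIntegrable_iff_integrableOn_Ioc_of_le hab.le).mpr
          (hinner_int.mono_set Set.Ioc_subset_Icc_self)).neg
      · simpa using hinner_neg s hs
    rw [intervalIntegral.integral_neg] at hpos
    linarith
  linarith [hLHS, hswap, hRHS]
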